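/- For every natural number d ≥ 2 and θ ∈ (0,π), F_d(θ) = (3/(d(d²-1))) · Σ_{i=1}^{⌊d/2⌋} 2i · C(d+1, 2i+1) · (-1)^{i-1} · (sin²θ)^{i-1} · (cos θ)^{d-2i}; in particular F_d(θ) is a polynomial in cos θ and sin²θ. -/

import Mathlib

open Real

private lemma sum_odd_aux (g : ℕ → ℝ) (h : ∀ j, Even j → g j = 0) (n : ℕ) :
    ∑ j ∈ Finset.range (2 * n), g j = ∑ i ∈ Finset.range n, g (2 * i + 1) := by
  induction n with
  | zero => simp
  | succ n ih =>
    have h2 : 2 * (n + 1) = (2 * n + 1) + 1 := by ring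
    rw [h2, Finset.sum_range_succ, Finset.sum_range_succ, ih, h (2 * n) ⟨n, by ring⟩,
      Finset.sum_range_succ]
    ring

private lemma sum_Icc_one (f : ℕ → ℝ) (m : ℕ) :
    ∑ i ∈ Finset.Icc 1 m, f i = ∑ i ∈ Finset.range m, f (i + 1) := by
  induction m with
  | zero => simp
  | succ n ih =>
    rw [Finset.sum_Icc_succ_top (by omega), ih, Finset.sum_range_succ]

private lemma choose_id (d i : ℕ) (h1 : 1 ≤ i) (h2 : 2 * i ≤ d) :
    2 * i * d.choose (2 * i + 1) + (d + 1 - 2 * i) * d.choose (2 * i - 1)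
      = 2 * i * (d + 1).choose (2 * i + 1) := by
  have h3 : 2 * i - 1 + 1 = 2 * i := by omega
  have h := Nat.choose_succ_right_eq d (2 * i - 1)
  rw [h3] at h
  have h4 : d - (2 * i - 1) = d + 1 - 2 * i := by omega
  rw [h4] at h
  have h5 : (d + 1).choose (2 * i + 1) = d.choose (2 * i) + d.choose (2 * i + 1) :=
    Nat.choose_succ_succ d (2 * i)
  have key : (d + 1 - 2 * i) * d.choose (2 * i - 1) = 2 * i * d.choose (2 * i) := by
    rw [mul_comm, ← h, mul_comm]
  rw [h5, key, Nat.mul_add, Nat.add_comm]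

private lemma I_pow_even_im {j : ℕ} (hj : Even j) : (Complex.I ^ j).im = 0 := by
  obtain ⟨r, rfl⟩ := hj
  rw [← two_mul, pow_mul, Complex.I_sq,
    show ((-1 : ℂ)) ^ r = (((-1 : ℝ) ^ r : ℝ) : ℂ) by push_cast; ring, Complex.ofReal_im]

private lemma I_pow_odd_im (i : ℕ) : (Complex.I ^ (2 * i + 1)).im = (-1) ^ i := by
  rw [pow_succ, pow_mul, Complex.I_sq,
    show ((-1 : ℂ)) ^ i * Complex.I = (((-1 : ℝ) ^ i : ℝ) : ℂ) * Complex.I by push_cast; ring,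
    Complex.im_ofReal_mul, Complex.I_im, mul_one]

private lemma sin_nat_mul_expand (d : ℕ) (t : ℝ) :
    Real.sin (d * t) = ∑ i ∈ Finset.range (d / 2 + 1),
      (d.choose (2 * i + 1) : ℝ) * (-1) ^ i * (Real.sin t ^ 2) ^ i * Real.sin t *
        Real.cos t ^ (d - (2 * i + 1)) := by
  have key : ((Real.cos t : ℂ) + (Real.sin t : ℂ) * Complex.I) ^ d
      = Complex.exp (((d * t : ℝ) : ℂ) * Complex.I) := by
    rw [show ((d * t : ℝ) : ℂ) * Complex.I = (d : ℂ) * ((t : ℂ) * Complex.I) by push_cast; ring,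
      Complex.exp_nat_mul, Complex.exp_mul_I, Complex.ofReal_cos, Complex.ofReal_sin]
  have him : Real.sin (d * t)
      = ((((Real.cos t : ℂ) + (Real.sin t : ℂ) * Complex.I)) ^ d).im := by
    rw [key, Complex.exp_ofReal_mul_I_im]
  rw [him, add_pow, Complex.im_sum]
  have hterm : ∀ k ∈ Finset.range (d + 1),
      ((Real.cos t : ℂ) ^ k * ((Real.sin t : ℂ) * Complex.I) ^ (d - k)
        * (d.choose k : ℂ)).im
      = (fun j => Real.cos t ^ (d - j) * Real.sin t ^ j * (d.choose j : ℝ)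
          * (Complex.I ^ j).im) (d + 1 - 1 - k) := by
    intro k hk
    simp only [Finset.mem_range] at hk
    have hk' : k ≤ d := by omega
    simp only [Nat.add_sub_cancel]
    rw [show ((Real.cos t : ℂ) ^ k * ((Real.sin t : ℂ) * Complex.I) ^ (d - k) * (d.choose k : ℂ))
        = (((Real.cos t ^ k * Real.sin t ^ (d - k) * (d.choose k : ℝ) : ℝ)) : ℂ)
          * Complex.I ^ (d - k) by push_cast; ring, Complex.im_ofReal_mul,
      Nat.sub_sub_self hk', Nat.choose_symm hk']
  rw [Finset.sum_congr rfl hterm, Finset.sum_range_reflect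
    (fun j => Real.cos t ^ (d - j) * Real.sin t ^ j * (d.choose j : ℝ)
      * (Complex.I ^ j).im) (d + 1)]
  set g : ℕ → ℝ := fun j => Real.cos t ^ (d - j) * Real.sin t ^ j * (d.choose j : ℝ)
      * (Complex.I ^ j).im with hg
  have hext : ∑ j ∈ Finset.range (d + 1), g j = ∑ j ∈ Finset.range (2 * (d / 2 + 1)), g j := by
    refine (Finset.sum_subset (f := g) (Finset.range_subset_range.mpr (show d + 1 ≤ 2 * (d / 2 + 1) by omega)) fun j _ hj => ?_)
    simp only [Finset.mem_range, not_lt] at hj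
    simp [hg, Nat.choose_eq_zero_of_lt (by omega : d < j)]
  rw [hext, sum_odd_aux g (fun j hj => by simp [hg, I_pow_even_im hj]) (d / 2 + 1)]
  refine Finset.sum_congr rfl fun i _ => ?_
  simp only [hg, I_pow_odd_im]
  rw [pow_succ, pow_mul]
  ring

private lemma key_sum (d : ℕ) (hd : 2 ≤ d) (s c : ℝ) :
    ∑ i ∈ Finset.range (d / 2 + 1),
      ((↑(d - (2 * i + 1)) : ℝ) * ((d.choose (2 * i + 1) : ℝ) * (-1) ^ i) * (s ^ 2) ^ i *
          c ^ (d - (2 * i + 1) - 1)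
        + (-(2 * (i : ℝ))) * ((d.choose (2 * i + 1) : ℝ) * (-1) ^ i) * (s ^ 2) ^ (i - 1) *
          c ^ (d - (2 * i + 1) + 1))
      = ∑ i ∈ Finset.Icc 1 (d / 2),
          (2 * i : ℝ) * ((d + 1).choose (2 * i + 1) : ℝ) * (-1 : ℝ) ^ (i - 1) *
            (s ^ 2) ^ (i - 1) * c ^ (d - 2 * i) := by
  rw [Finset.sum_add_distrib, Finset.sum_range_succ, Finset.sum_range_succ', sum_Icc_one,
    show d - (2 * (d / 2) + 1) = 0 from by omega]
  simp only [Nat.cast_zero, zero_mul, add_zero, neg_zero, mul_zero, zero_mul, Nat.cast_ofNat]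
  rw [← Finset.sum_add_distrib]
  refine Finset.sum_congr rfl fun i hi => ?_
  simp only [Finset.mem_range] at hi
  have hj2 : 2 * (i + 1) ≤ d := by omega
  have hv : (-(2 * ((i + 1 : ℕ) : ℝ))) * ((d.choose (2 * (i + 1) + 1) : ℝ) * (-1) ^ (i + 1)) *
        (s ^ 2) ^ (i + 1 - 1) * c ^ (d - (2 * (i + 1) + 1) + 1)
      = 2 * (((i + 1 : ℕ)) : ℝ) * (d.choose (2 * (i + 1) + 1) : ℝ) * (-1) ^ i *
        (s ^ 2) ^ i * c ^ (d - 2 * (i + 1)) := by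
    by_cases hc : 2 * (i + 1) + 1 ≤ d
    · rw [show d - (2 * (i + 1) + 1) + 1 = d - 2 * (i + 1) from by omega, Nat.add_sub_cancel,
        pow_succ]
      ring
    · rw [Nat.choose_eq_zero_of_lt (by omega)]
      simp
  rw [hv, Nat.add_sub_cancel,
    show d - (2 * i + 1) - 1 = d - 2 * (i + 1) from by omega]
  have key := choose_id d (i + 1) (by omega) hj2
  rw [show 2 * (i + 1) - 1 = 2 * i + 1 from by omega] at key
  have keyR := congrArg (Nat.cast : ℕ → ℝ) key
  push_cast at keyR
  rw [show d - (2 * i + 1) = d + 1 - 2 * (i + 1) from by omega]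
  push_cast
  linear_combination ((-1 : ℝ) ^ i * (s ^ 2) ^ i * c ^ (d - 2 * (i + 1))) * keyR

/-- F_d(θ) = −(3/(d(d²−1))) (1/sin θ) d/dθ (sin(dθ)/sin θ). -/
noncomputable def F (d : ℕ) (θ : ℝ) : ℝ :=
  -(3 / ((d : ℝ) * ((d : ℝ) ^ 2 - 1))) * (1 / Real.sin θ) *
    deriv (fun t : ℝ => Real.sin (d * t) / Real.sin t) θ

/-- For d ≥ 2 and θ ∈ (0, π),
F_d(θ) = (3/(d(d²−1))) Σ_{i=1}^{⌊d/2⌋} 2i C(d+1, 2i+1) (−1)^{i−1} (sin²θ)^{i−1} (cos θ)^{d−2i};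
in particular F_d(θ) is a polynomial in cos θ and sin²θ. -/
theorem F_eq_polynomial (d : ℕ) (hd : 2 ≤ d) (θ : ℝ) (hθ : θ ∈ Set.Ioo 0 π) :
    F d θ =
      (3 / ((d : ℝ) * ((d : ℝ) ^ 2 - 1))) *
        ∑ i ∈ Finset.Icc 1 (d / 2),
          (2 * i : ℝ) * ((d + 1).choose (2 * i + 1) : ℝ) * (-1 : ℝ) ^ (i - 1) *
            (Real.sin θ ^ 2) ^ (i - 1) * Real.cos θ ^ (d - 2 * i) := by

  obtain ⟨hθ0, hθπ⟩ := hθ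
  have hs : 0 < Real.sin θ := Real.sin_pos_of_pos_of_lt_pi hθ0 hθπ
  have hs' : Real.sin θ ≠ 0 := ne_of_gt hs
  set P : ℝ → ℝ := fun t => ∑ i ∈ Finset.range (d / 2 + 1),
    (d.choose (2 * i + 1) : ℝ) * (-1) ^ i * (Real.sin t ^ 2) ^ i *
      Real.cos t ^ (d - (2 * i + 1)) with hP
  have hev : (fun t : ℝ => Real.sin (d * t) / Real.sin t) =ᶠ[nhds θ] P := by
    have hne : ∀ᶠ t in nhds θ, Real.sin t ≠ 0 :=
      Real.continuous_sin.continuousAt.eventually_ne hs'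
    filter_upwards [hne] with t ht
    rw [sin_nat_mul_expand d t, Finset.sum_div]
    refine Finset.sum_congr rfl fun i _ => ?_
    field_simp
  have hderiv_eq : deriv (fun t : ℝ => Real.sin (d * t) / Real.sin t) θ = deriv P θ :=
    hev.deriv_eq
  have hD : HasDerivAt P
      (∑ i ∈ Finset.range (d / 2 + 1),
        -Real.sin θ *
          ((↑(d - (2 * i + 1)) : ℝ) * ((d.choose (2 * i + 1) : ℝ) * (-1) ^ i) *
              (Real.sin θ ^ 2) ^ i * Real.cos θ ^ (d - (2 * i + 1) - 1)
            + (-(2 * (i : ℝ))) * ((d.choose (2 * i + 1) : ℝ) * (-1) ^ i) *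
              (Real.sin θ ^ 2) ^ (i - 1) * Real.cos θ ^ (d - (2 * i + 1) + 1))) θ := by
    apply HasDerivAt.fun_sum
    intro i _
    have h := ((((Real.hasDerivAt_sin θ).pow 2).pow i).const_mul
        ((d.choose (2 * i + 1) : ℝ) * (-1) ^ i)).mul
      ((Real.hasDerivAt_cos θ).pow (d - (2 * i + 1)))
    convert h using 1
    case e'_4 => rfl
    case e'_8 =>
      funext y
      simp only [Pi.mul_apply, Pi.pow_apply]
    case e'_9 =>
      simp only [Pi.pow_apply]
      norm_num
      ring
  rw [F, hderiv_eq, hD.deriv, ← Finset.mul_sum, key_sum d hd (Real.sin θ) (Real.cos θ)]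
  have hd2 : (2 : ℝ) ≤ (d : ℝ) := by exact_mod_cast hd
  have hA : ((d : ℝ)) * ((d : ℝ) ^ 2 - 1) ≠ 0 := by nlinarith
  field_simp
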